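/- Let f(t) = a_0 + a_1 t + ⋯ + a_M t^M be a polynomial with complex coefficients. Then for every positive integer n, one has ∑_{k=1}^{n} C(n,k) (-1)^{k-1} f(k)/k = f'(0) + f(0) H_n + (-1)^{n-1} n! ∑_{m=n+1}^{M} a_m S(m-1, n), where the last sum is empty (equal to zero) when M ≤ n. -/

import Mathlib

open Finset Nat

/-- Stirling numbers of the second kind. -/
def stirling2 : ℕ → ℕ → ℕ
  | 0, 0 => 1
  | 0, _ + 1 => 0
  | _ + 1, 0 => 0
  | p + 1, k + 1 => (k + 1) * stirling2 p (k + 1) + stirling2 p k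


lemma stirling2_eq_zero_of_lt : ∀ p n, p < n → stirling2 p n = 0 := by
  intro p
  induction p with
  | zero => intro n hn; match n, hn with | k+1, _ => rfl
  | succ p ih =>
    intro n hn
    match n, hn with
    | k+1, hn =>
      show (k + 1) * stirling2 p (k + 1) + stirling2 p k = 0
      rw [ih (k+1) (by omega), ih k (by omega)]; ring

lemma alt_sum_choose (n : ℕ) : ∑ k ∈ range (n+1), (-1:ℂ)^k * (n.choose k)
    = if n = 0 then 1 else 0 := by
  have := congrArg (fun z : ℤ => (z : ℂ)) (Int.alternating_sum_range_choose (n := n))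
  push_cast at this
  simpa using this

lemma key : ∀ p n, ∑ k ∈ range (n+1), (-1:ℂ)^k * (n.choose k) * (k:ℂ)^p
    = (-1)^n * (n ! : ℂ) * stirling2 p n := by
  intro p
  induction p with
  | zero =>
    intro n
    simp only [pow_zero, mul_one]
    rw [alt_sum_choose]
    cases n with
    | zero => simp [stirling2]
    | succ m => simp [stirling2_eq_zero_of_lt 0 (m+1) (by omega)]
  | succ p ih =>
    intro n
    cases n with
    | zero => simp [stirling2]
    | succ m =>
      have step : ∑ k ∈ range (m+2), (-1:ℂ)^k * ((m+1).choose k) * (k:ℂ)^(p+1)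
          = (m+1) * ((∑ k ∈ range (m+2), (-1:ℂ)^k * ((m+1).choose k) * (k:ℂ)^p)
            - (∑ k ∈ range (m+1), (-1:ℂ)^k * (m.choose k) * (k:ℂ)^p)) := by
        have hext : (∑ k ∈ range (m+1), (-1:ℂ)^k * (m.choose k) * (k:ℂ)^p)
            = ∑ k ∈ range (m+2), (-1:ℂ)^k * (m.choose k) * (k:ℂ)^p := by
          rw [Finset.sum_range_succ (n := m+1)]
          simp [Nat.choose_eq_zero_of_lt (show m < m+1 by omega)]
        rw [hext, ← Finset.sum_sub_distrib, Finset.mul_sum]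
        rw [Finset.sum_range_succ' (fun k => (-1:ℂ)^k * ((m+1).choose k) * (k:ℂ)^(p+1)) (m+1),
            Finset.sum_range_succ' (fun k => (m+1:ℂ) * ((-1:ℂ)^k * ((m+1).choose k) * (k:ℂ)^p - (-1:ℂ)^k * (m.choose k) * (k:ℂ)^p)) (m+1)]
        simp only [Nat.cast_zero, Nat.choose_zero_right, Nat.cast_one, pow_zero, sub_self,
          mul_zero, add_zero, zero_pow (show p+1 ≠ 0 by omega), mul_one, one_mul, pow_one]
        apply Finset.sum_congr rfl
        intro j _
        have habs : ((m+1) * (m.choose j) : ℂ) = ((m+1).choose (j+1)) * (j+1) := by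
          exact_mod_cast congrArg (Nat.cast : ℕ → ℂ) (Nat.add_one_mul_choose_eq m j)
        have hpascal : (((m+1).choose (j+1) : ℕ) : ℂ) = (m.choose j) + (m.choose (j+1)) := by
          exact_mod_cast congrArg (Nat.cast : ℕ → ℂ) (Nat.choose_succ_succ m j)
        push_cast at habs hpascal ⊢
        linear_combination (-( (-1:ℂ)^(j+1) * ((j:ℂ)+1)^p )) * habs
          + (-((m:ℂ)+1) * (-1:ℂ)^(j+1) * ((j:ℂ)+1)^p) * hpascal
      rw [step, ih (m+1), ih m]
      have hs : (stirling2 (p+1) (m+1) : ℂ) = (m+1) * stirling2 p (m+1) + stirling2 p m := by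
        exact_mod_cast congrArg (Nat.cast : ℕ → ℂ) (show stirling2 (p+1) (m+1) = _ from rfl)
      rw [hs]
      have hf : ((m+1)! : ℂ) = (m+1) * (m ! : ℂ) := by
        exact_mod_cast congrArg (Nat.cast : ℕ → ℂ) (Nat.factorial_succ m)
      rw [hf]
      ring

lemma icc_to_range (n : ℕ) (g : ℕ → ℂ) : ∑ k ∈ Finset.Icc 1 n, g k = ∑ j ∈ range n, g (j+1) := by
  rw [← Finset.Ico_add_one_right_eq_Icc, Finset.sum_Ico_eq_sum_range]
  simp [add_comm]

lemma alt_shift (n : ℕ) : ∑ j ∈ range (n+1), (-1:ℂ)^j * ((n+1).choose (j+1)) = 1 := by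
  have h := alt_sum_choose (n+1)
  rw [Finset.sum_range_succ' (fun k => (-1:ℂ)^k * ((n+1).choose k)) (n+1)] at h
  simp only [Nat.add_eq_zero, if_neg (by omega : ¬(n+1 = 0)), pow_zero,
    Nat.choose_zero_right, Nat.cast_one, one_mul, mul_one] at h
  have h2 : ∑ j ∈ range (n+1), (-1:ℂ)^(j+1) * ((n+1).choose (j+1))
      = -∑ j ∈ range (n+1), (-1:ℂ)^j * ((n+1).choose (j+1)) := by
    rw [← Finset.sum_neg_distrib]
    exact Finset.sum_congr rfl (fun j _ => by ring)
  rw [h2] at h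
  norm_num at h
  linear_combination -h

lemma harm : ∀ n : ℕ, ∑ j ∈ range n, ((n.choose (j+1)):ℂ) * (-1)^j / (j+1)
    = ∑ i ∈ range n, (1:ℂ)/(i+1) := by
  intro n
  induction n with
  | zero => simp
  | succ n ih =>
    rw [Finset.sum_range_succ (fun i => (1:ℂ)/(i+1)) n, ← ih]
    have hsplit : ∀ j, (((n+1).choose (j+1) : ℕ) : ℂ) * (-1)^j / (j+1)
        = ((n.choose (j+1)):ℂ) * (-1)^j / (j+1) + ((n.choose j):ℂ) * (-1)^j / (j+1) := by
      intro j
      have : (((n+1).choose (j+1) : ℕ) : ℂ) = (n.choose j) + (n.choose (j+1)) := by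
        exact_mod_cast congrArg (Nat.cast : ℕ → ℂ) (Nat.choose_succ_succ n j)
      rw [this]; ring
    rw [Finset.sum_congr rfl (fun j _ => hsplit j), Finset.sum_add_distrib]
    congr 1
    · -- first sum: extend to range (n+1) vs range n
      rw [Finset.sum_range_succ]
      simp [Nat.choose_eq_zero_of_lt (show n < n+1 by omega)]
    · -- second sum = 1/(n+1)
      have hterm : ∀ j, ((n.choose j):ℂ) * (-1)^j / (j+1)
          = ((-1:ℂ)^j * ((n+1).choose (j+1))) / (n+1) := by
        intro j
        have habs : ((n+1) * (n.choose j) : ℂ) = ((n+1).choose (j+1)) * (j+1) := by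
          exact_mod_cast congrArg (Nat.cast : ℕ → ℂ) (Nat.add_one_mul_choose_eq n j)
        have h1 : ((j:ℂ)+1) ≠ 0 := Nat.cast_add_one_ne_zero j
        have h2 : ((n:ℂ)+1) ≠ 0 := Nat.cast_add_one_ne_zero n
        field_simp
        linear_combination habs
      rw [Finset.sum_congr rfl (fun j _ => hterm j), ← Finset.sum_div, alt_shift, one_div]

lemma Tlem (n' m : ℕ) :
    ∑ j ∈ range (n'+1), (((n'+1).choose (j+1)):ℂ) * (-1)^j * ((j:ℂ)+1)^m
      = (if m = 0 then 1 else 0) + (-1)^n' * (((n'+1)! : ℕ) : ℂ) * stirling2 m (n'+1) := by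
  have h := key m (n'+1)
  rw [Finset.sum_range_succ' (fun k => (-1:ℂ)^k * ((n'+1).choose k) * (k:ℂ)^m) (n'+1)] at h
  simp only [Nat.cast_zero, Nat.choose_zero_right, Nat.cast_one, pow_zero, one_mul, mul_one] at h
  have hz : (0:ℂ)^m = if m = 0 then 1 else 0 := by
    cases m with
    | zero => simp
    | succ m => simp [zero_pow]
  rw [hz] at h
  have h2 : ∑ j ∈ range (n'+1), (-1:ℂ)^(j+1) * (((n'+1).choose (j+1)):ℂ) * (((j+1:ℕ)):ℂ)^m
      = -∑ j ∈ range (n'+1), (((n'+1).choose (j+1)):ℂ) * (-1)^j * ((j:ℂ)+1)^m := by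
    rw [← Finset.sum_neg_distrib]
    refine Finset.sum_congr rfl (fun j _ => ?_)
    push_cast
    ring
  rw [h2] at h
  have : (-1:ℂ)^(n'+1) = -(-1:ℂ)^n' := by ring
  rw [this] at h
  linear_combination -h

theorem melzak_harmonic_general (n : ℕ) (hn : 0 < n) (M : ℕ) (f : Polynomial ℂ)
    (hf : f.natDegree ≤ M) :
    ∑ k ∈ Finset.Icc 1 n, (n.choose k : ℂ) * (-1) ^ (k - 1) * f.eval (k : ℂ) / (k : ℂ) =
      f.derivative.eval 0 + f.eval 0 * ∑ i ∈ Finset.range n, (1 : ℂ) / (i + 1) +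
        (-1) ^ (n - 1) * (n ! : ℂ) *
          ∑ m ∈ Finset.Icc (n + 1) M, f.coeff m * (stirling2 (m - 1) n : ℂ) := by
  obtain ⟨n', rfl⟩ : ∃ n', n = n'+1 := ⟨n-1, by omega⟩
  rw [icc_to_range (n'+1) (fun k => ((n'+1).choose k : ℂ) * (-1)^(k-1) * f.eval (k:ℂ) / k)]
  simp only [Nat.add_sub_cancel]
  have hev : ∀ j : ℕ, f.eval (((j+1:ℕ)):ℂ) = ∑ m ∈ range (M+1), f.coeff m * (((j+1:ℕ)):ℂ)^m :=
    fun j => Polynomial.eval_eq_sum_range' (by omega) _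
  have step1 : ∑ j ∈ range (n'+1),
        (((n'+1).choose (j+1)):ℂ) * (-1)^j * f.eval (((j+1:ℕ)):ℂ) / (((j+1:ℕ)):ℂ)
      = ∑ m ∈ range (M+1), f.coeff m *
          ∑ j ∈ range (n'+1), (((n'+1).choose (j+1)):ℂ) * (-1)^j * (((j+1:ℕ)):ℂ)^m / (((j+1:ℕ)):ℂ) := by
    calc ∑ j ∈ range (n'+1),
            (((n'+1).choose (j+1)):ℂ) * (-1)^j * f.eval (((j+1:ℕ)):ℂ) / (((j+1:ℕ)):ℂ)
        = ∑ j ∈ range (n'+1), ∑ m ∈ range (M+1),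
            f.coeff m * ((((n'+1).choose (j+1)):ℂ) * (-1)^j * (((j+1:ℕ)):ℂ)^m / (((j+1:ℕ)):ℂ)) := by
          refine Finset.sum_congr rfl fun j _ => ?_
          rw [hev j, Finset.mul_sum, Finset.sum_div]
          exact Finset.sum_congr rfl fun m _ => by ring
      _ = ∑ m ∈ range (M+1), ∑ j ∈ range (n'+1),
            f.coeff m * ((((n'+1).choose (j+1)):ℂ) * (-1)^j * (((j+1:ℕ)):ℂ)^m / (((j+1:ℕ)):ℂ)) :=
          Finset.sum_comm
      _ = _ := by
          refine Finset.sum_congr rfl fun m _ => ?_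
          rw [Finset.mul_sum]
  rw [step1]
  rw [Finset.sum_range_succ' (fun m => f.coeff m *
      ∑ j ∈ range (n'+1), (((n'+1).choose (j+1)):ℂ) * (-1)^j * (((j+1:ℕ)):ℂ)^m / (((j+1:ℕ)):ℂ)) M]
  -- constant term
  have hU0 : ∑ j ∈ range (n'+1), (((n'+1).choose (j+1)):ℂ) * (-1)^j * (((j+1:ℕ)):ℂ)^0 / (((j+1:ℕ)):ℂ)
      = ∑ i ∈ range (n'+1), (1:ℂ)/(i+1) := by
    rw [← harm (n'+1)]
    refine Finset.sum_congr rfl fun j _ => ?_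
    push_cast
    ring
  have hUm : ∀ m : ℕ, ∑ j ∈ range (n'+1),
        (((n'+1).choose (j+1)):ℂ) * (-1)^j * (((j+1:ℕ)):ℂ)^(m+1) / (((j+1:ℕ)):ℂ)
      = (if m = 0 then 1 else 0) + (-1)^n' * (((n'+1)! : ℕ) : ℂ) * stirling2 m (n'+1) := by
    intro m
    rw [← Tlem n' m]
    refine Finset.sum_congr rfl fun j _ => ?_
    have h1 : ((j:ℂ)+1) ≠ 0 := Nat.cast_add_one_ne_zero j
    push_cast
    rw [pow_succ]
    field_simp
  rw [hU0]
  have step2 : ∑ m ∈ range M, f.coeff (m+1) *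
        ∑ j ∈ range (n'+1), (((n'+1).choose (j+1)):ℂ) * (-1)^j * (((j+1:ℕ)):ℂ)^(m+1) / (((j+1:ℕ)):ℂ)
      = (∑ m ∈ range M, f.coeff (m+1) * (if m = 0 then 1 else 0))
        + (-1)^n' * (((n'+1)! : ℕ) : ℂ) * ∑ m ∈ range M, f.coeff (m+1) * stirling2 m (n'+1) := by
    rw [Finset.mul_sum, ← Finset.sum_add_distrib]
    refine Finset.sum_congr rfl fun m _ => ?_
    rw [hUm m]
    ring
  rw [step2]
  -- the if-sum equals derivative eval 0
  have hder : f.derivative.eval 0 = f.coeff 1 := by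
    rw [← Polynomial.coeff_zero_eq_eval_zero, Polynomial.coeff_derivative]
    simp
  have hif : (∑ m ∈ range M, f.coeff (m+1) * (if m = 0 then 1 else 0)) = f.derivative.eval 0 := by
    rw [hder]
    have : ∀ m ∈ range M, f.coeff (m+1) * (if m = 0 then 1 else 0)
        = if (0:ℕ) = m then f.coeff (m+1) else 0 := by
      intro m _
      by_cases h : m = 0 <;> simp [h, eq_comm]
    rw [Finset.sum_congr rfl this, Finset.sum_ite_eq]
    cases M with
    | zero =>
      simp only [Finset.range_zero, Finset.sum_empty]
      exact (Polynomial.coeff_eq_zero_of_natDegree_lt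
        (show f.natDegree < 1 by omega)).symm
    | succ M => simp
  rw [hif]
  -- the stirling sum
  have h1 : ∑ m ∈ Finset.Icc 1 M, f.coeff m * (stirling2 (m-1) (n'+1) : ℂ)
      = ∑ m ∈ range M, f.coeff (m+1) * (stirling2 m (n'+1) : ℂ) := by
    rw [icc_to_range M (fun m => f.coeff m * (stirling2 (m-1) (n'+1) : ℂ))]
    simp only [Nat.add_sub_cancel]
  have hst : ∑ m ∈ range M, f.coeff (m+1) * (stirling2 m (n'+1) : ℂ)
      = ∑ m ∈ Finset.Icc (n'+1+1) M, f.coeff m * (stirling2 (m-1) (n'+1) : ℂ) := by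
    rw [← h1]
    refine (Finset.sum_subset ?_ ?_).symm
    · intro x hx
      simp only [Finset.mem_Icc] at hx ⊢
      omega
    · intro x hx hnx
      simp only [Finset.mem_Icc] at hx hnx
      have : x - 1 < n'+1 := by omega
      rw [stirling2_eq_zero_of_lt _ _ this]
      simp
  rw [hst, Polynomial.coeff_zero_eq_eval_zero]
  ring
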